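/- Let Q be an NQPR in dimension d ≥ 2. Then min_j λ_min(Q_j) = −(√(d+1) − 1)/d holds if and only if there exists a SIC Π_1, …, Π_{d²} in dimension d such that Q_j = √(d+1)·Π_j + ((1 − √(d+1))/d)·I for every j. -/

import Mathlib

open Matrix

section Helpers
variable {d : ℕ} {A : Matrix (Fin d) (Fin d) ℂ}

private lemma nqpr_conj (hA : A.IsHermitian) (a : ℂ) :
    A - a • 1 = (hA.eigenvectorUnitary : Matrix (Fin d) (Fin d) ℂ) *
    diagonal (fun i => (hA.eigenvalues i : ℂ) - a) *
    star (hA.eigenvectorUnitary : Matrix (Fin d) (Fin d) ℂ) := by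
  set U := (hA.eigenvectorUnitary : Matrix (Fin d) (Fin d) ℂ) with hUdef
  have hU : U * star U = 1 := mem_unitaryGroup_iff.mp (hA.eigenvectorUnitary).2
  have hD : diagonal (fun i => (hA.eigenvalues i : ℂ) - a)
      = diagonal (RCLike.ofReal ∘ hA.eigenvalues) - a • 1 := by
    ext i j
    by_cases h : i = j <;> simp [h, Matrix.one_apply, Matrix.diagonal_apply]
  rw [hD, mul_sub, sub_mul, Matrix.mul_smul, Matrix.smul_mul, Matrix.mul_one, hU]
  conv_lhs => rw [hA.spectral_theorem, Unitary.conjStarAlgAut_apply]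

private lemma nqpr_trace (hA : A.IsHermitian) :
    A.trace = ∑ i, (hA.eigenvalues i : ℂ) := by
  conv_lhs => rw [hA.spectral_theorem, Unitary.conjStarAlgAut_apply]
  rw [Matrix.trace_mul_cycle]
  rw [show (star (hA.eigenvectorUnitary : Matrix (Fin d) (Fin d) ℂ)) * hA.eigenvectorUnitary = 1
    from mem_unitaryGroup_iff'.mp (hA.eigenvectorUnitary).2]
  simp [Matrix.trace_diagonal]

private lemma nqpr_conj_mul (hA : A.IsHermitian) (a b : ℂ) :
    (A - a • 1) * (A - b • 1) = (hA.eigenvectorUnitary : Matrix (Fin d) (Fin d) ℂ) *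
    diagonal (fun i => ((hA.eigenvalues i : ℂ) - a) * ((hA.eigenvalues i : ℂ) - b)) *
    star (hA.eigenvectorUnitary : Matrix (Fin d) (Fin d) ℂ) := by
  set U := (hA.eigenvectorUnitary : Matrix (Fin d) (Fin d) ℂ) with hUdef
  have hU' : star U * U = 1 := mem_unitaryGroup_iff'.mp (hA.eigenvectorUnitary).2
  rw [nqpr_conj hA a, nqpr_conj hA b, ← diagonal_mul_diagonal]
  calc U * diagonal (fun i => (hA.eigenvalues i : ℂ) - a) * star U *
        (U * diagonal (fun i => (hA.eigenvalues i : ℂ) - b) * star U)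
      = U * diagonal (fun i => (hA.eigenvalues i : ℂ) - a) * (star U * U) *
        diagonal (fun i => (hA.eigenvalues i : ℂ) - b) * star U := by
        simp only [Matrix.mul_assoc]
    _ = _ := by rw [hU', Matrix.mul_one]; simp only [Matrix.mul_assoc]

private lemma nqpr_trace_sq (hA : A.IsHermitian) :
    (A * A).trace = ∑ i, ((hA.eigenvalues i : ℂ)) ^ 2 := by
  have h := nqpr_conj_mul hA 0 0
  simp only [Complex.ofReal_zero, zero_smul, sub_zero] at h
  rw [h, Matrix.trace_mul_cycle]
  rw [show (star (hA.eigenvectorUnitary : Matrix (Fin d) (Fin d) ℂ)) * hA.eigenvectorUnitary = 1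
    from mem_unitaryGroup_iff'.mp (hA.eigenvectorUnitary).2]
  simp [Matrix.trace_diagonal, sq]

private lemma nqpr_quad_iff (hA : A.IsHermitian) (a b : ℝ) :
    (A - (a : ℂ) • 1) * (A - (b : ℂ) • 1) = 0 ↔
      ∀ i, (hA.eigenvalues i - a) * (hA.eigenvalues i - b) = 0 := by
  set U := (hA.eigenvectorUnitary : Matrix (Fin d) (Fin d) ℂ) with hUdef
  have hU : U * star U = 1 := mem_unitaryGroup_iff.mp (hA.eigenvectorUnitary).2
  have hU' : star U * U = 1 := mem_unitaryGroup_iff'.mp (hA.eigenvectorUnitary).2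
  rw [nqpr_conj_mul hA a b]
  constructor
  · intro h i
    have hM : diagonal (fun i => ((hA.eigenvalues i : ℂ) - a) * ((hA.eigenvalues i : ℂ) - b))
        = 0 := by
      have h2 := congrArg (fun M => star U * M * U) h
      simp only [Matrix.mul_zero, Matrix.zero_mul] at h2
      calc diagonal (fun i => ((hA.eigenvalues i : ℂ) - a) * ((hA.eigenvalues i : ℂ) - b))
          = star U * (U * diagonal (fun i => ((hA.eigenvalues i : ℂ) - a) *
              ((hA.eigenvalues i : ℂ) - b)) * star U) * U := by
            simp only [Matrix.mul_assoc, hU]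
            rw [← Matrix.mul_assoc (star U) U, hU', Matrix.one_mul, Matrix.mul_one]
        _ = 0 := h2
    have := congrFun (congrFun hM i) i
    simp only [Matrix.diagonal_apply_eq, Matrix.zero_apply] at this
    exact_mod_cast this
  · intro h
    have : (fun i => ((hA.eigenvalues i : ℂ) - a) * ((hA.eigenvalues i : ℂ) - b))
        = fun _ => 0 := by
      funext i; exact_mod_cast congrArg (Complex.ofReal) (h i)
    rw [this]
    simp

end Helpers

private lemma forced_spectrum {d : ℕ} (hd : 2 ≤ d) (x : Fin d → ℝ)
    (h1 : ∑ i, x i = 1) (h2 : ∑ i, (x i) ^ 2 = d)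
    (hlb : ∀ i, (1 - Real.sqrt ((d:ℝ) + 1)) / d ≤ x i) :
    ∀ i, (x i - (1 - Real.sqrt ((d:ℝ) + 1)) / d) *
      (x i - ((1 - Real.sqrt ((d:ℝ) + 1)) / d + Real.sqrt ((d:ℝ) + 1))) = 0 := by
  set s := Real.sqrt ((d:ℝ) + 1) with hs
  set μ : ℝ := (1 - s) / d with hμ
  have hdR : (2:ℝ) ≤ (d:ℝ) := by exact_mod_cast hd
  have hd0 : (d:ℝ) ≠ 0 := by linarith
  have hs2 : s ^ 2 = (d:ℝ) + 1 := Real.sq_sqrt (by positivity)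
  have hspos : 0 < s := Real.sqrt_pos.mpr (by positivity)
  have hy0 : ∀ i, 0 ≤ x i - μ := fun i => sub_nonneg.2 (hlb i)
  have hsy : ∑ i, (x i - μ) = s := by
    rw [Finset.sum_sub_distrib, h1, Finset.sum_const, Finset.card_univ, Fintype.card_fin]
    rw [hμ, nsmul_eq_mul]; field_simp; ring
  have hkey : (d:ℝ) * μ ^ 2 = 2 * μ + 1 := by
    rw [hμ]; field_simp; linear_combination hs2
  have hsy2 : ∑ i, (x i - μ) ^ 2 = s ^ 2 := by
    have : ∀ i, (x i - μ) ^ 2 = (x i) ^ 2 - 2 * μ * (x i) + μ ^ 2 := fun i => by ring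
    rw [Finset.sum_congr rfl (fun i _ => this i)]
    rw [Finset.sum_add_distrib, Finset.sum_sub_distrib, h2, ← Finset.mul_sum, h1,
      Finset.sum_const, Finset.card_univ, Fintype.card_fin, nsmul_eq_mul]
    rw [hs2]; linarith [hkey]
  have hyle : ∀ i, x i - μ ≤ s := by
    intro i
    calc x i - μ ≤ ∑ k, (x k - μ) :=
          Finset.single_le_sum (fun k _ => hy0 k) (Finset.mem_univ i)
      _ = s := hsy
  have hsum0 : ∑ i, (x i - μ) * (s - (x i - μ)) = 0 := by
    have : ∀ i, (x i - μ) * (s - (x i - μ)) = s * (x i - μ) - (x i - μ) ^ 2 :=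
      fun i => by ring
    rw [Finset.sum_congr rfl (fun i _ => this i), Finset.sum_sub_distrib, hsy2,
      ← Finset.mul_sum, hsy]
    ring
  have hall := (Finset.sum_eq_zero_iff_of_nonneg
    (fun i _ => mul_nonneg (hy0 i) (sub_nonneg.2 (hyle i)))).mp hsum0
  intro i
  have hi := hall i (Finset.mem_univ i)
  linear_combination -hi

/-- For an NQPR `Q` in dimension `d ≥ 2`, the minimal negativity bound
`min_j λ_min(Q j) = −(√(d+1) − 1)/d` is attained iff there is a SIC `Π` such that
`Q j = √(d+1)·Π j + ((1 − √(d+1))/d)·I` for every `j`. -/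
theorem stmt_3 (d : ℕ) (hd : 2 ≤ d)
    (Q : Fin (d ^ 2) → Matrix (Fin d) (Fin d) ℂ)
    (hherm : ∀ j, (Q j).IsHermitian)
    (htr : ∀ j, (Q j).trace = 1)
    (hpair : ∀ j k, (Q j * Q k).trace = if j = k then (d : ℂ) else 0)
    (hsum : ∑ j, Q j = (d : ℂ) • (1 : Matrix (Fin d) (Fin d) ℂ)) :
    (⨅ j, ⨅ i, (hherm j).eigenvalues i) = -((Real.sqrt (d + 1) - 1) / d) ↔
      ∃ P : Fin (d ^ 2) → Matrix (Fin d) (Fin d) ℂ,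
        (∀ j, (P j).IsHermitian) ∧
        (∀ j, P j * P j = P j) ∧
        (∀ j, (P j).trace = 1) ∧
        (∀ j k, (P j * P k).trace =
          ((d : ℂ) * (if j = k then 1 else 0) + 1) / ((d : ℂ) + 1)) ∧
        (∀ j, Q j = (Real.sqrt (d + 1) : ℂ) • P j +
          (((1 - Real.sqrt (d + 1)) / d : ℝ) : ℂ) • (1 : Matrix (Fin d) (Fin d) ℂ)) := by
  have hdR : (2:ℝ) ≤ (d:ℝ) := by exact_mod_cast hd
  set s : ℝ := Real.sqrt ((d:ℝ) + 1) with hs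
  set μ : ℝ := (1 - s) / d with hμ
  have hd0 : (d:ℝ) ≠ 0 := by linarith
  have hs2 : s ^ 2 = (d:ℝ) + 1 := Real.sq_sqrt (by positivity)
  have hspos : 0 < s := Real.sqrt_pos.mpr (by positivity)
  have hs0 : s ≠ 0 := ne_of_gt hspos
  have hμeq : -((s - 1) / (d:ℝ)) = μ := by rw [hμ]; ring
  have hd0C : (d:ℂ) ≠ 0 := by exact_mod_cast (by positivity : (0:ℝ) < d).ne'
  have hs0C : (s:ℂ) ≠ 0 := by exact_mod_cast hs0
  have hs2C : (s:ℂ) ^ 2 = (d:ℂ) + 1 := by exact_mod_cast hs2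
  have hμC : (μ:ℂ) = (1 - (s:ℂ)) / (d:ℂ) := by rw [hμ]; push_cast; ring
  have h1d : (d:ℂ) + 1 ≠ 0 := by
    intro h
    have : ((d:ℝ) + 1 : ℂ) = 0 := by push_cast; push_cast at h; linear_combination h
    have : (d:ℝ) + 1 = 0 := by exact_mod_cast this
    linarith
  haveI : NeZero d := ⟨by omega⟩
  have hbddJ : ∀ f : Fin (d^2) → ℝ, BddBelow (Set.range f) :=
    fun f => (Set.finite_range f).bddBelow
  have hbddI : ∀ f : Fin d → ℝ, BddBelow (Set.range f) :=
    fun f => (Set.finite_range f).bddBelow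
  constructor
  · intro hinf
    have hlb : ∀ j i, μ ≤ (hherm j).eigenvalues i := by
      intro j i
      have h1 : (⨅ j, ⨅ i, (hherm j).eigenvalues i) ≤ ⨅ i, (hherm j).eigenvalues i :=
        ciInf_le (hbddJ _) j
      have h2 : (⨅ i, (hherm j).eigenvalues i) ≤ (hherm j).eigenvalues i :=
        ciInf_le (hbddI _) i
      rw [hinf, hμeq] at h1
      linarith
    have hquad : ∀ j, (Q j - ((μ:ℝ):ℂ) • 1) * (Q j - ((μ + s : ℝ):ℂ) • 1) = 0 := by
      intro j
      rw [nqpr_quad_iff (hherm j) μ (μ + s)]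
      have hsum1 : ∑ i, (hherm j).eigenvalues i = 1 := by
        have h := (nqpr_trace (hherm j)).symm.trans (htr j)
        exact_mod_cast h
      have hsum2 : ∑ i, ((hherm j).eigenvalues i) ^ 2 = (d:ℝ) := by
        have h := (nqpr_trace_sq (hherm j)).symm.trans (by simpa using hpair j j)
        exact_mod_cast h
      exact forced_spectrum hd _ hsum1 hsum2 (fun i => hlb j i)
    set c : ℂ := ((s:ℝ):ℂ)⁻¹ with hc
    refine ⟨fun j => c • (Q j - ((μ:ℝ):ℂ) • 1), ?_, ?_, ?_, ?_, ?_⟩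
    · intro j
      have h1 : (((μ:ℝ):ℂ) • (1 : Matrix (Fin d) (Fin d) ℂ)).IsHermitian := by
        unfold Matrix.IsHermitian
        rw [Matrix.conjTranspose_smul, Matrix.conjTranspose_one]
        simp [Complex.star_def, Complex.conj_ofReal]
      have h2 := (hherm j).sub h1
      unfold Matrix.IsHermitian
      rw [Matrix.conjTranspose_smul, h2]
      congr 1
      simp [hc, Complex.star_def, ← Complex.conj_inv, Complex.conj_ofReal]
    · intro j
      have hB : (Q j - ((μ:ℝ):ℂ) • 1) * (Q j - ((μ:ℝ):ℂ) • 1)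
          = (s:ℂ) • (Q j - ((μ:ℝ):ℂ) • 1) := by
        have h := hquad j
        have h2 : Q j - ((μ + s : ℝ):ℂ) • 1
            = (Q j - ((μ:ℝ):ℂ) • 1) - ((s:ℝ):ℂ) • 1 := by
          push_cast
          rw [add_smul]
          abel
        rw [h2, mul_sub, Matrix.mul_smul, Matrix.mul_one, sub_eq_zero] at h
        exact h
      show (c • (Q j - ((μ:ℝ):ℂ) • 1)) * (c • (Q j - ((μ:ℝ):ℂ) • 1))
          = c • (Q j - ((μ:ℝ):ℂ) • 1)
      rw [Matrix.smul_mul, Matrix.mul_smul, hB, smul_smul, smul_smul]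
      congr 1
      rw [hc]; field_simp
    · intro j
      rw [Matrix.trace_smul, Matrix.trace_sub, Matrix.trace_smul, htr j,
        Matrix.trace_one]
      rw [hc, hμC]
      simp only [Fintype.card_fin, smul_eq_mul]
      field_simp
      ring
    · intro j k
      have hexp : (c • (Q j - ((μ:ℝ):ℂ) • 1)) * (c • (Q k - ((μ:ℝ):ℂ) • 1))
          = (c * c) • (Q j * Q k - ((μ:ℝ):ℂ) • Q j - ((μ:ℝ):ℂ) • Q k
              + (((μ:ℝ):ℂ) * ((μ:ℝ):ℂ)) • 1) := by
        rw [Matrix.smul_mul, Matrix.mul_smul, smul_smul]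
        congr 1
        simp only [Matrix.sub_mul, Matrix.mul_sub, Matrix.smul_mul, Matrix.mul_smul,
          Matrix.one_mul, Matrix.mul_one, smul_smul, smul_add, smul_sub]
        abel
      rw [hexp, Matrix.trace_smul, Matrix.trace_add, Matrix.trace_sub,
        Matrix.trace_sub, Matrix.trace_smul, Matrix.trace_smul, Matrix.trace_smul,
        htr j, htr k, hpair j k, Matrix.trace_one]
      simp only [Fintype.card_fin, smul_eq_mul, mul_one]
      by_cases hjk : j = k
      · simp only [hjk, if_pos rfl, mul_one, if_true]
        rw [hc, hμC]
        field_simp [h1d]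
        linear_combination (1 - (d:ℂ)) * hs2C
      · simp only [if_neg hjk, mul_zero]
        rw [hc, hμC]
        field_simp [h1d]
        linear_combination hs2C
    · intro j
      rw [smul_smul]
      rw [show (s:ℂ) * c = 1 by rw [hc]; field_simp]
      rw [one_smul]
      abel
  · rintro ⟨P, hPh, hPproj, hPtr, hPpair, hPeq⟩
    have hquad : ∀ j i, ((hherm j).eigenvalues i - μ) *
        ((hherm j).eigenvalues i - (μ + s)) = 0 := by
      intro j
      rw [← nqpr_quad_iff (hherm j) μ (μ + s)]
      have hB : Q j - ((μ:ℝ):ℂ) • 1 = ((s:ℝ):ℂ) • P j := by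
        rw [hPeq j]; abel_nf
      have hB2 : Q j - ((μ + s : ℝ):ℂ) • 1
          = ((s:ℝ):ℂ) • P j - ((s:ℝ):ℂ) • 1 := by
        rw [hPeq j]; push_cast; rw [add_smul]; abel
      rw [hB, hB2, Matrix.smul_mul, Matrix.mul_sub, Matrix.mul_smul, Matrix.mul_smul,
        hPproj j, Matrix.mul_one, sub_self, smul_zero]
    have hlb : ∀ j i, μ ≤ (hherm j).eigenvalues i := by
      intro j i
      rcases mul_eq_zero.mp (hquad j i) with h | h
      · have := sub_eq_zero.mp h; linarith
      · have := sub_eq_zero.mp h; linarith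
    have j0 : Fin (d ^ 2) := ⟨0, by positivity⟩
    have hsum1 : ∑ i, (hherm j0).eigenvalues i = 1 := by
      have h := (nqpr_trace (hherm j0)).symm.trans (htr j0)
      exact_mod_cast h
    have hex : ∃ i, (hherm j0).eigenvalues i = μ := by
      by_contra hcon
      push_neg at hcon
      have hall : ∀ i, (hherm j0).eigenvalues i = μ + s := by
        intro i
        rcases mul_eq_zero.mp (hquad j0 i) with h | h
        · exact absurd (sub_eq_zero.mp h) (hcon i)
        · exact sub_eq_zero.mp h
      rw [Finset.sum_congr rfl (fun i _ => hall i), Finset.sum_const,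
        Finset.card_univ, Fintype.card_fin, nsmul_eq_mul] at hsum1
      have hμd : (d:ℝ) * μ = 1 - s := by rw [hμ]; field_simp
      nlinarith [hspos, hdR]
    obtain ⟨i0, hi0⟩ := hex
    rw [hμeq]
    apply le_antisymm
    · calc (⨅ j, ⨅ i, (hherm j).eigenvalues i) ≤ ⨅ i, (hherm j0).eigenvalues i :=
          ciInf_le (hbddJ _) j0
        _ ≤ (hherm j0).eigenvalues i0 := ciInf_le (hbddI _) i0
        _ = μ := hi0
    · exact le_ciInf (fun j => le_ciInf (fun i => hlb j i))
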